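/- For all differentiable vector fields X, Y on ℂ^m one has L_E(∘)(X,Y) = X ∘ Y, i.e. [E, X∘Y] − [E,X]∘Y − X∘[E,Y] = X∘Y; that is, E is an Euler field for the truncated-polynomial multiplication on ℂ^m. -/

import Mathlib

open scoped BigOperators

noncomputable section

/-- The truncated-polynomial multiplication on `ℂ^m ≅ ℂ[X]/(X^m)`:
`(u ∘ v)_k = Σ_{i+j=k} u_i v_j`. -/
def tmul {m : ℕ} (u v : Fin m → ℂ) : Fin m → ℂ :=
  fun k => ∑ i : Fin m, ∑ j : Fin m,
    if (i : ℕ) + (j : ℕ) = (k : ℕ) then u i * v j else 0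

/-- The `i`-th standard basis vector of `ℂ^m` (zero if `i ≥ m`); `std 0` is the unit `e`. -/
def std {m : ℕ} (i : ℕ) : Fin m → ℂ := fun j => if (j : ℕ) = i then 1 else 0

/-- Lie bracket of vector fields on `ℂ^m`: `[X,Y](p) = DY(p)(X(p)) − DX(p)(Y(p))`. -/
def bracket {m : ℕ} (X Y : (Fin m → ℂ) → Fin m → ℂ) : (Fin m → ℂ) → Fin m → ℂ :=
  fun p => fderiv ℂ Y p (X p) - fderiv ℂ X p (Y p)

/-- Pointwise truncated product of vector fields. -/
def pmul {m : ℕ} (X Y : (Fin m → ℂ) → Fin m → ℂ) : (Fin m → ℂ) → Fin m → ℂ :=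
  fun p => tmul (X p) (Y p)

/-- Lie derivative of the multiplication `∘` along `X`:
`L_X(∘)(Y,Z) = [X, Y∘Z] − [X,Y]∘Z − Y∘[X,Z]`. -/
def lieD {m : ℕ} (X Y Z : (Fin m → ℂ) → Fin m → ℂ) : (Fin m → ℂ) → Fin m → ℂ :=
  fun p => bracket X (pmul Y Z) p - tmul (bracket X Y p) (Z p) - tmul (Y p) (bracket X Z p)

/-- The Euler field `E(t) = (t_0 + a, t_1 + 1, t_2, …, t_{m−1})`. -/
def Efield {m : ℕ} (a : ℂ) : (Fin m → ℂ) → Fin m → ℂ :=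
  fun p => p + a • std 0 + std 1


lemma ite_add_zero' (c : Prop) [Decidable c] (x y : ℂ) :
    (if c then x + y else (0:ℂ)) = (if c then x else 0) + (if c then y else 0) := by
  split <;> simp

def tmulL {m : ℕ} : (Fin m → ℂ) →ₗ[ℂ] (Fin m → ℂ) →ₗ[ℂ] (Fin m → ℂ) :=
  LinearMap.mk₂ ℂ tmul
    (fun u u' v => by
      funext k
      simp [tmul, add_mul, ite_add_zero', Finset.sum_add_distrib])
    (fun c u v => by
      funext k
      simp [tmul, Finset.mul_sum, mul_ite, mul_zero, mul_assoc])
    (fun u v v' => by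
      funext k
      simp [tmul, mul_add, ite_add_zero', Finset.sum_add_distrib])
    (fun c u v => by
      funext k
      simp [tmul, Finset.mul_sum, mul_ite, mul_zero]
      ring_nf
      congr 1; funext i; congr 1; funext j; split <;> ring)

def tmulCLM {m : ℕ} : (Fin m → ℂ) →L[ℂ] (Fin m → ℂ) →L[ℂ] (Fin m → ℂ) :=
  LinearMap.toContinuousLinearMap
    { toFun := fun u => LinearMap.toContinuousLinearMap (tmulL u)
      map_add' := by intro u u'; ext v k; simp [tmulL]
      map_smul' := by intro c u; ext v k; simp [tmulL] }

@[simp] lemma tmulCLM_apply {m : ℕ} (u v : Fin m → ℂ) : tmulCLM u v = tmul u v := rfl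

lemma tmul_sub_left {m : ℕ} (u u' v : Fin m → ℂ) :
    tmul (u - u') v = tmul u v - tmul u' v := by
  exact map_sub ((tmulL (m := m)).flip v) u u'

lemma tmul_sub_right {m : ℕ} (u v v' : Fin m → ℂ) :
    tmul u (v - v') = tmul u v - tmul u v' := by
  exact map_sub (tmulL (m := m) u) v v'

lemma fderiv_Efield {m : ℕ} (a : ℂ) (p : Fin m → ℂ) :
    fderiv ℂ (Efield a) p = ContinuousLinearMap.id ℂ (Fin m → ℂ) := by
  have h : HasFDerivAt (Efield (m := m) a) (ContinuousLinearMap.id ℂ (Fin m → ℂ)) p :=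
    ((hasFDerivAt_id p).add_const (a • std 0)).add_const (std 1)
  exact h.fderiv

lemma hasFDeriv_pmul {m : ℕ} (X Y : (Fin m → ℂ) → Fin m → ℂ)
    (hX : Differentiable ℂ X) (hY : Differentiable ℂ Y) (p : Fin m → ℂ) :
    HasFDerivAt (pmul X Y)
      ((tmulCLM (m := m).isBoundedBilinearMap.deriv (X p, Y p)).comp
        ((fderiv ℂ X p).prod (fderiv ℂ Y p))) p := by
  have hb := tmulCLM (m := m).isBoundedBilinearMap
  exact (hb.hasFDerivAt (X p, Y p)).comp p (((hX p).hasFDerivAt).prodMk ((hY p).hasFDerivAt))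

/-- `E` is an Euler field for the truncated-polynomial multiplication on
`ℂ^m`: for all differentiable vector fields `X, Y`, `L_E(∘)(X,Y) = X ∘ Y`, i.e.
`[E, X∘Y] − [E,X]∘Y − X∘[E,Y] = X∘Y`. -/
theorem stmt2 {m : ℕ} (hm : 1 ≤ m) (a : ℂ)
    (X Y : (Fin m → ℂ) → Fin m → ℂ)
    (hX : Differentiable ℂ X) (hY : Differentiable ℂ Y) :
    lieD (Efield a) X Y = pmul X Y := by
  funext p
  have hE : fderiv ℂ (Efield a) p = ContinuousLinearMap.id ℂ (Fin m → ℂ) := fderiv_Efield a p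
  have hP := (hasFDeriv_pmul X Y hX hY p).fderiv
  set Ep := Efield a p with hEp
  have hder : fderiv ℂ (pmul X Y) p Ep
      = tmul (fderiv ℂ X p Ep) (Y p) + tmul (X p) (fderiv ℂ Y p Ep) := by
    rw [hP]
    simp [IsBoundedBilinearMap.deriv_apply]
    abel
  simp only [lieD, bracket, pmul, hE, ContinuousLinearMap.id_apply, ← hEp, hder,
    tmul_sub_left, tmul_sub_right]
  abel
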